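/- Let α be a finite type, m ≥ 1 a natural number, and f : Finset α → ℝ a monotone submodular set function with f(∅) = 0. Let G₀, G₁, …, G_m be a greedy sequence: G₀ = ∅ and for each j < m, G_{j+1} = insert a_j G_j for some element a_j satisfying f(insert a_j G_j) ≥ f(insert a G_j) for every a : α. Then for every finset S of cardinality at most m, f(G_m) ≥ (1 − 1/e) · f(S), where e = exp 1. -/

import Mathlib

theorem stmt_1 {α : Type*} [Fintype α] [DecidableEq α] (m : ℕ) (hm : 1 ≤ m)
    (f : Finset α → ℝ)
    (hmono : ∀ S T : Finset α, S ⊆ T → f S ≤ f T)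
    (hsubmod : ∀ X Y : Finset α, X ⊆ Y → ∀ s ∉ Y,
      f (insert s X) - f X ≥ f (insert s Y) - f Y)
    (hempty : f ∅ = 0)
    (G : ℕ → Finset α)
    (hG0 : G 0 = ∅)
    (hGstep : ∀ j < m, ∃ a : α, G (j + 1) = insert a (G j) ∧
      ∀ a' : α, f (insert a' (G j)) ≤ f (insert a (G j))) :
    ∀ S : Finset α, S.card ≤ m → (1 - 1 / Real.exp 1) * f S ≤ f (G m) := by
  intro S hS
  have hfS : 0 ≤ f S := hempty ▸ hmono ∅ S (Finset.empty_subset S)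
  have hm0 : (0:ℝ) < m := by exact_mod_cast hm
  have hc : (0:ℝ) ≤ 1 - 1/(m:ℝ) := by
    have h1 : (1:ℝ) ≤ m := by exact_mod_cast hm
    rw [sub_nonneg, div_le_one hm0]; exact h1
  -- telescoping submodularity bound
  have tel : ∀ (T B : Finset α), f (B ∪ T) - f B ≤ ∑ s ∈ T, (f (insert s B) - f B) := by
    intro T B
    induction T using Finset.induction_on with
    | empty => simp
    | insert t T ht ih =>
      rw [Finset.sum_insert ht]
      have h1 : B ∪ insert t T = insert t (B ∪ T) := by
        rw [Finset.union_insert]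
      by_cases htB : t ∈ B ∪ T
      · have h2 : insert t (B ∪ T) = B ∪ T := Finset.insert_eq_self.mpr htB
        rw [h1, h2]
        have hnn : 0 ≤ f (insert t B) - f B := by
          have := hmono B (insert t B) (Finset.subset_insert t B)
          linarith
        linarith
      · have h2 := hsubmod B (B ∪ T) Finset.subset_union_left t htB
        rw [h1]
        linarith
  -- one greedy step
  have step : ∀ j < m, f S - f (G (j+1)) ≤ (1 - 1/(m:ℝ)) * (f S - f (G j)) := by
    intro j hj
    obtain ⟨a, haG, hamax⟩ := hGstep j hj
    have hgain : 0 ≤ f (G (j+1)) - f (G j) := by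
      rw [haG]
      have := hmono (G j) (insert a (G j)) (Finset.subset_insert a (G j))
      linarith
    have hmarg : ∀ s ∈ S, f (insert s (G j)) - f (G j) ≤ f (G (j+1)) - f (G j) := by
      intro s _
      rw [haG]
      have := hamax s
      linarith
    have h1 : f S ≤ f (G j ∪ S) := hmono S _ Finset.subset_union_right
    have h2 := tel S (G j)
    have h3 : ∑ s ∈ S, (f (insert s (G j)) - f (G j)) ≤ S.card * (f (G (j+1)) - f (G j)) := by
      calc ∑ s ∈ S, (f (insert s (G j)) - f (G j))
          ≤ ∑ _s ∈ S, (f (G (j+1)) - f (G j)) := Finset.sum_le_sum hmarg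
        _ = S.card * (f (G (j+1)) - f (G j)) := by rw [Finset.sum_const, nsmul_eq_mul]
    have h4 : (S.card : ℝ) * (f (G (j+1)) - f (G j)) ≤ m * (f (G (j+1)) - f (G j)) := by
      apply mul_le_mul_of_nonneg_right _ hgain
      exact_mod_cast hS
    have key : f S - f (G j) ≤ (f (G (j+1)) - f (G j)) * m := by
      rw [mul_comm]; linarith
    have h5 : (1/(m:ℝ)) * (f S - f (G j)) ≤ f (G (j+1)) - f (G j) := by
      rw [div_mul_eq_mul_div, one_mul, div_le_iff₀ hm0]
      exact key
    have heq : (1 - 1/(m:ℝ)) * (f S - f (G j))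
        = (f S - f (G j)) - (1/(m:ℝ)) * (f S - f (G j)) := by ring
    rw [heq]
    linarith
  -- iterate
  have iter : ∀ j, j ≤ m → f S - f (G j) ≤ (1 - 1/(m:ℝ))^j * f S := by
    intro j
    induction j with
    | zero => intro _; simp [hG0, hempty]
    | succ j ih =>
      intro hj
      have hj' : j < m := hj
      have h1 := step j hj'
      have h2 := ih (le_of_lt hj')
      calc f S - f (G (j+1)) ≤ (1 - 1/(m:ℝ)) * (f S - f (G j)) := h1
        _ ≤ (1 - 1/(m:ℝ)) * ((1 - 1/(m:ℝ))^j * f S) := mul_le_mul_of_nonneg_left h2 hc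
        _ = (1 - 1/(m:ℝ))^(j+1) * f S := by ring
  have hfinal := iter m le_rfl
  have hle : (1 - 1/(m:ℝ)) ≤ Real.exp (-(1/(m:ℝ))) := by
    have := Real.add_one_le_exp (-(1/(m:ℝ)))
    linarith
  have hpow : (1 - 1/(m:ℝ))^m ≤ Real.exp (-(1/(m:ℝ)))^m := pow_le_pow_left₀ hc hle m
  have hexp : Real.exp (-(1/(m:ℝ)))^m = Real.exp (-1) := by
    rw [← Real.exp_nat_mul]
    congr 1
    field_simp
  have hmul : (1 - 1/(m:ℝ))^m * f S ≤ Real.exp (-1) * f S :=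
    mul_le_mul_of_nonneg_right (hexp ▸ hpow) hfS
  have hexp1 : Real.exp (-1) = 1 / Real.exp 1 := by
    rw [Real.exp_neg]; ring
  rw [hexp1] at hmul
  rw [sub_mul, one_mul]
  linarith
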